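/- (Comparison lemma for the deviation equation.) Let β > 0 and let p : [0, ∞) → ℝ be continuous with p(t) ≥ β² for all t ≥ 0. Let ζ ∈ ℝ be a constant and let ω : [0, ∞) → ℝ be twice differentiable with ω″(t) = p(t)·ω(t) + ζ for all t ≥ 0, ω(0) = ω₀ > 0 and ω′(0) = 0. If ω₀ + 2·min(ζ, 0)/β² > 0, then ω(t) ≥ (ω₀ + 2·min(ζ, 0)/β²)·cosh(β·t) > 0 for all t ≥ 0. -/

import Mathlib

open Set

/-- If `w 0 = 0`, `w' 0 = 0` and `w'' ≥ β² w` on `(0,T)`, then `w T ≥ 0`. -/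
private lemma deviation_aux_nonneg (β T : ℝ) (w w1 q : ℝ → ℝ) (hβ : 0 < β) (hT : 0 ≤ T)
    (hw : ∀ t, 0 ≤ t → HasDerivAt w (w1 t) t)
    (hw1 : ∀ t, 0 ≤ t → HasDerivAt w1 (q t) t)
    (hq : ∀ t, 0 < t → t < T → β ^ 2 * w t ≤ q t)
    (hw0 : w 0 = 0) (hw10 : w1 0 = 0) : 0 ≤ w T := by
  have hderH : ∀ t, 0 ≤ t →
      HasDerivAt (fun t => (w1 t + β * w t) * Real.exp (-(β * t)))
        ((q t - β ^ 2 * w t) * Real.exp (-(β * t))) t := by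
    intro t ht
    have h1 : HasDerivAt (fun s : ℝ => -(β * s)) (-β) t := by
      exact (((hasDerivAt_id t).const_mul β).neg).congr_deriv (by ring)
    have he : HasDerivAt (fun s => Real.exp (-(β * s))) (-β * Real.exp (-(β * t))) t := by
      simpa [mul_comm] using h1.exp
    have h2 := ((hw1 t ht).add ((hw t ht).const_mul β)).mul he
    exact h2.congr_deriv (by simp only [Pi.add_apply]; ring)
  have hmono : MonotoneOn (fun t => (w1 t + β * w t) * Real.exp (-(β * t))) (Icc 0 T) := by
    apply monotoneOn_of_deriv_nonneg (convex_Icc 0 T)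
    · intro x hx
      exact ((hderH x hx.1).differentiableAt.continuousAt).continuousWithinAt
    · intro x hx
      rw [interior_Icc] at hx
      exact ((hderH x hx.1.le).differentiableAt).differentiableWithinAt
    · intro x hx
      rw [interior_Icc] at hx
      rw [(hderH x hx.1.le).deriv]
      have h1 := hq x hx.1 hx.2
      have h2 := (Real.exp_pos (-(β * x))).le
      nlinarith
  have hHge : ∀ t, t ∈ Icc 0 T → 0 ≤ w1 t + β * w t := by
    intro t htm
    have h1 := hmono (left_mem_Icc.2 hT) htm htm.1
    simp only [hw0, hw10, mul_zero, add_zero, zero_mul] at h1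
    have h2 := Real.exp_pos (-(β * t))
    by_contra h
    push_neg at h
    nlinarith
  have hderW : ∀ t, 0 ≤ t →
      HasDerivAt (fun t => w t * Real.exp (β * t))
        ((w1 t + β * w t) * Real.exp (β * t)) t := by
    intro t ht
    have h1 : HasDerivAt (fun s : ℝ => β * s) β t := by
      simpa using (hasDerivAt_id t).const_mul β
    have he : HasDerivAt (fun s => Real.exp (β * s)) (β * Real.exp (β * t)) t := by
      simpa [mul_comm] using h1.exp
    have h2 := (hw t ht).mul he
    exact h2.congr_deriv (by ring)
  have hmonoW : MonotoneOn (fun t => w t * Real.exp (β * t)) (Icc 0 T) := by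
    apply monotoneOn_of_deriv_nonneg (convex_Icc 0 T)
    · intro x hx
      exact ((hderW x hx.1).differentiableAt.continuousAt).continuousWithinAt
    · intro x hx
      rw [interior_Icc] at hx
      exact ((hderW x hx.1.le).differentiableAt).differentiableWithinAt
    · intro x hx
      rw [interior_Icc] at hx
      rw [(hderW x hx.1.le).deriv]
      exact mul_nonneg (hHge x ⟨hx.1.le, hx.2.le⟩) (Real.exp_pos _).le
  have h1 := hmonoW (left_mem_Icc.2 hT) (right_mem_Icc.2 hT) hT
  simp only [hw0, zero_mul] at h1
  have h2 := Real.exp_pos (β * T)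
  by_contra h
  push_neg at h
  nlinarith

/-- Core comparison: as long as `ω ≥ 0` on `(0,T)`, `ω T` dominates the explicit
solution of `u'' = β² u + ζ`, `u 0 = ω₀`, `u' 0 = 0`. -/
private lemma deviation_core (β ζ ω₀ : ℝ) (p ω : ℝ → ℝ)
    (hβ : 0 < β)
    (hpl : ∀ t : ℝ, 0 ≤ t → β ^ 2 ≤ p t)
    (hdiff : ∀ t : ℝ, 0 ≤ t → DifferentiableAt ℝ ω t)
    (hdiff2 : ∀ t : ℝ, 0 ≤ t → DifferentiableAt ℝ (deriv ω) t)
    (hode : ∀ t : ℝ, 0 ≤ t → deriv (deriv ω) t = p t * ω t + ζ)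
    (hω0 : ω 0 = ω₀) (hω'0 : deriv ω 0 = 0)
    (T : ℝ) (hT : 0 ≤ T) (hpos : ∀ s, 0 < s → s < T → 0 ≤ ω s) :
    (ω₀ + ζ / β ^ 2) * Real.cosh (β * T) - ζ / β ^ 2 ≤ ω T := by
  have hβ2 : (0:ℝ) < β ^ 2 := by positivity
  set A := ω₀ + ζ / β ^ 2 with hA
  have hderu : ∀ t : ℝ,
      HasDerivAt (fun t => A * Real.cosh (β * t) - ζ / β ^ 2) (A * (β * Real.sinh (β * t))) t := by
    intro t
    have h1 : HasDerivAt (fun s : ℝ => β * s) β t := by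
      simpa using (hasDerivAt_id t).const_mul β
    have h2 := (((Real.hasDerivAt_cosh (β * t)).comp t h1).const_mul A).sub_const (ζ / β ^ 2)
    exact h2.congr_deriv (by ring)
  have hderw : ∀ t, 0 ≤ t →
      HasDerivAt (fun t => ω t - (A * Real.cosh (β * t) - ζ / β ^ 2))
        (deriv ω t - A * (β * Real.sinh (β * t))) t :=
    fun t ht => ((hdiff t ht).hasDerivAt).sub (hderu t)
  have hderw1 : ∀ t, 0 ≤ t →
      HasDerivAt (fun t => deriv ω t - A * (β * Real.sinh (β * t)))
        (p t * ω t - β ^ 2 * (A * Real.cosh (β * t) - ζ / β ^ 2)) t := by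
    intro t ht
    have h1 : HasDerivAt (deriv ω) (p t * ω t + ζ) t := by
      have := (hdiff2 t ht).hasDerivAt
      rwa [hode t ht] at this
    have hb : HasDerivAt (fun s : ℝ => β * s) β t := by
      simpa using (hasDerivAt_id t).const_mul β
    have h2 : HasDerivAt (fun s => A * (β * Real.sinh (β * s)))
        (β ^ 2 * (A * Real.cosh (β * t) - ζ / β ^ 2) + ζ) t := by
      have h3 := (((Real.hasDerivAt_sinh (β * t)).comp t hb).const_mul β).const_mul A
      exact h3.congr_deriv (by field_simp; ring)
    have h4 := h1.sub h2
    exact h4.congr_deriv (by ring)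
  have key : 0 ≤ ω T - (A * Real.cosh (β * T) - ζ / β ^ 2) := by
    apply deviation_aux_nonneg β T _ _
      (fun t => p t * ω t - β ^ 2 * (A * Real.cosh (β * t) - ζ / β ^ 2)) hβ hT hderw hderw1
    · intro t ht hlt
      have h1 := hpl t ht.le
      have h2 := hpos t ht hlt
      nlinarith
    · simp [hω0, hA]
    · simp [hω'0]
  linarith

theorem deviation_comparison_lemma (β ζ ω₀ : ℝ) (p ω : ℝ → ℝ)
    (hβ : 0 < β)
    (hpcont : ContinuousOn p (Set.Ici 0))
    (hpl : ∀ t : ℝ, 0 ≤ t → β^2 ≤ p t)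
    (hdiff : ∀ t : ℝ, 0 ≤ t → DifferentiableAt ℝ ω t)
    (hdiff2 : ∀ t : ℝ, 0 ≤ t → DifferentiableAt ℝ (deriv ω) t)
    (hode : ∀ t : ℝ, 0 ≤ t → deriv (deriv ω) t = p t * ω t + ζ)
    (hω0 : ω 0 = ω₀) (hω₀pos : 0 < ω₀) (hω'0 : deriv ω 0 = 0)
    (hcond : 0 < ω₀ + 2 * min ζ 0 / β^2) :
    ∀ t : ℝ, 0 ≤ t →
      (ω₀ + 2 * min ζ 0 / β^2) * Real.cosh (β*t) ≤ ω t ∧ 0 < ω t := by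
  have hβ2 : (0:ℝ) < β ^ 2 := by positivity
  -- the explicit solution dominates the claimed bound
  have hub : ∀ t : ℝ, (ω₀ + 2 * min ζ 0 / β ^ 2) * Real.cosh (β * t) ≤
      (ω₀ + ζ / β ^ 2) * Real.cosh (β * t) - ζ / β ^ 2 := by
    intro t
    have hC := Real.one_le_cosh (β * t)
    rcases le_total ζ 0 with h | h
    · rw [min_eq_left h, mul_div_assoc]
      have he : ζ / β ^ 2 ≤ 0 := div_nonpos_of_nonpos_of_nonneg h hβ2.le
      generalize ζ / β ^ 2 = e at he ⊢
      nlinarith [mul_nonneg (neg_nonneg.2 he) (by linarith : (0:ℝ) ≤ Real.cosh (β * t) + 1)]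
    · rw [min_eq_right h, mul_zero, zero_div]
      have he : 0 ≤ ζ / β ^ 2 := div_nonneg h hβ2.le
      generalize ζ / β ^ 2 = e at he ⊢
      nlinarith [mul_nonneg he (sub_nonneg.2 hC)]
  have hbound : ∀ t : ℝ, (0:ℝ) < (ω₀ + 2 * min ζ 0 / β ^ 2) * Real.cosh (β * t) :=
    fun t => mul_pos hcond (Real.cosh_pos _)
  -- positivity of ω everywhere on [0,∞)
  have hpos : ∀ t : ℝ, 0 ≤ t → 0 < ω t := by
    by_contra hcon
    push_neg at hcon
    obtain ⟨t₀, ht₀, hωt₀⟩ := hcon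
    set S : Set ℝ := Ici 0 ∩ ω ⁻¹' Iic 0 with hS
    have hSne : S.Nonempty := ⟨t₀, ht₀, hωt₀⟩
    have hSbdd : BddBelow S := ⟨0, fun x hx => hx.1⟩
    have hScl : IsClosed S := by
      have hcont : ContinuousOn ω (Ici 0) :=
        fun x hx => ((hdiff x hx).continuousAt).continuousWithinAt
      exact hcont.preimage_isClosed_of_isClosed isClosed_Ici isClosed_Iic
    have hτS : sInf S ∈ S := hScl.csInf_mem hSne hSbdd
    have hτ0 : 0 ≤ sInf S := hτS.1
    have hωτ : ω (sInf S) ≤ 0 := hτS.2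
    have hpre : ∀ s, 0 < s → s < sInf S → 0 ≤ ω s := by
      intro s hs hst
      by_contra h
      push_neg at h
      have : sInf S ≤ s := csInf_le hSbdd ⟨hs.le, h.le⟩
      linarith
    have h1 := deviation_core β ζ ω₀ p ω hβ hpl hdiff hdiff2 hode hω0 hω'0 (sInf S) hτ0 hpre
    have h2 := hub (sInf S)
    have h3 := hbound (sInf S)
    linarith
  intro t ht
  have h1 := deviation_core β ζ ω₀ p ω hβ hpl hdiff hdiff2 hode hω0 hω'0 t ht
    (fun s hs _ => (hpos s hs.le).le)
  have h2 := hub t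
  exact ⟨le_trans h2 h1, hpos t ht⟩
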